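/- Let G be a finite group. If H and K are subgroups of G with m_G(H) = m_G(K) = m*(G), then m_G(H ⊔ K) = m*(G) and m_G(H ⊓ K) = m*(G); that is, the set CD(G) = {H ≤ G : m_G(H) = m*(G)} is closed under subgroup join and intersection, and hence forms a sublattice of the lattice of subgroups of G. -/

import Mathlib

/-- The Chermak–Delgado measure of a subgroup `H` of `G`: `|H| * |C_G(H)|`. -/
noncomputable def cdMeasure (G : Type*) [Group G] (H : Subgroup G) : ℕ :=
  Nat.card H * Nat.card (Subgroup.centralizer (H : Set G))

/-- The maximal Chermak–Delgado measure of `G`. -/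
noncomputable def cdMax (G : Type*) [Group G] : ℕ :=
  sSup (Set.range (cdMeasure G))

/-- The Chermak–Delgado lattice of `G`, as the set of subgroups attaining
the maximal Chermak–Delgado measure. -/
def CD (G : Type*) [Group G] : Set (Subgroup G) :=
  {H : Subgroup G | cdMeasure G H = cdMax G}

/-- In a finite group, `|H| * |K| ≤ |H ⊔ K| * |H ⊓ K|`. -/
lemma card_mul_card_le_card_sup_mul_card_inf
    {G : Type*} [Group G] [Fintype G] (H K : Subgroup G) :
    Nat.card H * Nat.card K ≤ Nat.card (H ⊔ K : Subgroup G) * Nat.card (H ⊓ K : Subgroup G) := by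
  have hK : Nat.card K = Nat.card (H ⊓ K : Subgroup G) * (H ⊓ K).relIndex K := by
    have := Subgroup.card_mul_index ((H ⊓ K).subgroupOf K)
    rw [Nat.card_congr (Subgroup.subgroupOfEquivOfLe (inf_le_right : H ⊓ K ≤ K)).toEquiv] at this
    exact this.symm
  have hHK : Nat.card (H ⊔ K : Subgroup G) = Nat.card H * H.relIndex (H ⊔ K) := by
    have := Subgroup.card_mul_index (H.subgroupOf (H ⊔ K))
    rw [Nat.card_congr (Subgroup.subgroupOfEquivOfLe (le_sup_left : H ≤ H ⊔ K)).toEquiv] at this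
    exact this.symm
  have hrel : (H ⊓ K).relIndex K ≤ H.relIndex (H ⊔ K) := by
    rw [Subgroup.inf_relIndex_right]
    refine Subgroup.relIndex_le_of_le_right le_sup_right ?_
    exact Subgroup.index_ne_zero_of_finite (H := H.subgroupOf (H ⊔ K))
  calc Nat.card H * Nat.card K
      = Nat.card H * (Nat.card (H ⊓ K : Subgroup G) * (H ⊓ K).relIndex K) := by rw [hK]
    _ ≤ Nat.card H * (Nat.card (H ⊓ K : Subgroup G) * H.relIndex (H ⊔ K)) := by
        exact Nat.mul_le_mul_left _ (Nat.mul_le_mul_left _ hrel)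
    _ = Nat.card (H ⊔ K : Subgroup G) * Nat.card (H ⊓ K : Subgroup G) := by
        rw [hHK]; ring

lemma centralizer_sup' {G : Type*} [Group G] (H K : Subgroup G) :
    Subgroup.centralizer ((H ⊔ K : Subgroup G) : Set G)
      = Subgroup.centralizer (H : Set G) ⊓ Subgroup.centralizer (K : Set G) := by
  apply le_antisymm
  · exact le_inf (Subgroup.centralizer_le (by exact_mod_cast SetLike.coe_subset_coe.mpr le_sup_left))
      (Subgroup.centralizer_le (by exact_mod_cast SetLike.coe_subset_coe.mpr le_sup_right))
  · rw [Subgroup.le_centralizer_iff]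
    refine sup_le ?_ ?_
    · exact Subgroup.le_centralizer_iff.mp inf_le_left
    · exact Subgroup.le_centralizer_iff.mp inf_le_right

lemma cdMeasure_le_cdMax (G : Type*) [Group G] [Fintype G] (L : Subgroup G) :
    cdMeasure G L ≤ cdMax G := by
  apply le_csSup
  · exact ⟨Fintype.card G * Fintype.card G, by
      rintro _ ⟨M, rfl⟩
      have h1 : Nat.card M ≤ Fintype.card G := by
        simpa [Nat.card_eq_fintype_card] using Subgroup.card_le_card_group M
      have h2 : Nat.card (Subgroup.centralizer (M : Set G)) ≤ Fintype.card G := by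
        simpa [Nat.card_eq_fintype_card] using
          Subgroup.card_le_card_group (Subgroup.centralizer (M : Set G))
      exact Nat.mul_le_mul h1 h2⟩
  · exact ⟨L, rfl⟩

/-- For a finite group `G`, if subgroups `H` and `K` both attain the maximal
Chermak–Delgado measure, then so do `H ⊔ K` and `H ⊓ K`; i.e. the Chermak–Delgado
lattice is closed under join and intersection. -/
theorem CD_closed_sup_inf
    (G : Type*) [Group G] [Fintype G] (H K : Subgroup G)
    (hH : cdMeasure G H = cdMax G) (hK : cdMeasure G K = cdMax G) :
    cdMeasure G (H ⊔ K) = cdMax G ∧ cdMeasure G (H ⊓ K) = cdMax G := by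
  set M := cdMax G with hM
  have hMpos : 0 < M := by
    rw [← hH]
    unfold cdMeasure
    exact Nat.mul_pos Nat.card_pos Nat.card_pos
  have ha : cdMeasure G (H ⊔ K) ≤ M := cdMeasure_le_cdMax G _
  have hb : cdMeasure G (H ⊓ K) ≤ M := cdMeasure_le_cdMax G _
  -- key inequality: m(H ⊔ K) * m(H ⊓ K) ≥ M * M
  have key : M * M ≤ cdMeasure G (H ⊔ K) * cdMeasure G (H ⊓ K) := by
    have hMM : M * M = cdMeasure G H * cdMeasure G K := by rw [hH, hK]
    rw [hMM]
    unfold cdMeasure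
    set CH := Subgroup.centralizer (H : Set G)
    set CK := Subgroup.centralizer (K : Set G)
    have hCsup : Subgroup.centralizer ((H ⊔ K : Subgroup G) : Set G) = CH ⊓ CK :=
      centralizer_sup' H K
    have hCinf : Nat.card (CH ⊔ CK : Subgroup G)
        ≤ Nat.card (Subgroup.centralizer ((H ⊓ K : Subgroup G) : Set G)) := by
      refine Subgroup.card_le_of_le (sup_le ?_ ?_)
      · exact Subgroup.centralizer_le (by exact_mod_cast SetLike.coe_subset_coe.mpr inf_le_left)
      · exact Subgroup.centralizer_le (by exact_mod_cast SetLike.coe_subset_coe.mpr inf_le_right)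
    calc Nat.card H * Nat.card CH * (Nat.card K * Nat.card CK)
        = (Nat.card H * Nat.card K) * (Nat.card CH * Nat.card CK) := by ring
      _ ≤ (Nat.card (H ⊔ K : Subgroup G) * Nat.card (H ⊓ K : Subgroup G)) *
            (Nat.card (CH ⊔ CK : Subgroup G) * Nat.card (CH ⊓ CK : Subgroup G)) :=
          Nat.mul_le_mul (card_mul_card_le_card_sup_mul_card_inf H K)
            (card_mul_card_le_card_sup_mul_card_inf CH CK)
      _ ≤ (Nat.card (H ⊔ K : Subgroup G) * Nat.card (H ⊓ K : Subgroup G)) *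
            (Nat.card (Subgroup.centralizer ((H ⊓ K : Subgroup G) : Set G)) *
              Nat.card (CH ⊓ CK : Subgroup G)) :=
          Nat.mul_le_mul_left _ (Nat.mul_le_mul_right _ hCinf)
      _ = Nat.card (H ⊔ K : Subgroup G) *
            Nat.card (Subgroup.centralizer ((H ⊔ K : Subgroup G) : Set G)) *
            (Nat.card (H ⊓ K : Subgroup G) *
              Nat.card (Subgroup.centralizer ((H ⊓ K : Subgroup G) : Set G))) := by
          rw [hCsup]; ring
  -- conclude
  have hbM : M ≤ cdMeasure G (H ⊓ K) := by
    by_contra h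
    push_neg at h
    have : cdMeasure G (H ⊔ K) * cdMeasure G (H ⊓ K) < M * M :=
      Nat.mul_lt_mul_of_le_of_lt ha h hMpos
    omega
  have haM : M ≤ cdMeasure G (H ⊔ K) := by
    by_contra h
    push_neg at h
    have : cdMeasure G (H ⊔ K) * cdMeasure G (H ⊓ K) < M * M := by
      calc cdMeasure G (H ⊔ K) * cdMeasure G (H ⊓ K) ≤ cdMeasure G (H ⊔ K) * M :=
            Nat.mul_le_mul_left _ hb
        _ < M * M := Nat.mul_lt_mul_of_lt_of_le h le_rfl hMpos
    omega
  exact ⟨le_antisymm ha haM, le_antisymm hb hbM⟩
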